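/- Let u₀ ∈ ℂ, let j₋, j₊ ∈ ℤ ∪ {−∞, +∞} with j₋ + 1 < j₊, and set 𝒟 = {u₀ + m : m ∈ ℤ, j₋ < m < j₊}. Let W be a complex vector space spanned by linearly independent vectors F(u), u ∈ 𝒟. Let α, δ ∈ ℂ, let Δ₋, Δ₊ : ℂ → ℂ, and let A₀, D₀ be linear operators on W such that, writing A(u) = A₀ + αu·Id and D(u) = D₀ + δu·Id: A(u)F(u) = Δ₋(u−1/2) F(u−1) for all u ∈ 𝒟 with u−1 ∈ 𝒟, A(u₀+j₋+1)F(u₀+j₋+1) = 0 if j₋ is finite, D(u)F(u) = Δ₊(u+1/2) F(u+1) for all u ∈ 𝒟 with u+1 ∈ 𝒟, and D(u₀+j₊−1)F(u₀+j₊−1) = 0 if j₊ is finite. Assume there are Q₀, Q₁ ∈ ℂ such that Δ₊(u)Δ₋(u) = αδu² + Q₁u + Q₀ for all u ∈ (𝒟+1/2) ∩ (𝒟−1/2), and αδu² + Q₁u + Q₀ = 0 for u = u₀+j₊−1/2 (if j₊ finite) and for u = u₀+j₋+1/2 (if j₋ finite). Then: (1) [D₀,A₀] = αD₀ + δA₀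 − Q₁·Id; (2) defining B₀ := αD₀ + δA₀ − Q₁·Id and defining C₀ as the linear operator with C₀F(u) = −u F(u) for all u ∈ 𝒟, one has B₀C₀ = (A₀ + α·Id)D₀ − ((1/4)αδ + (1/2)Q₁ + Q₀)·Id, and the six commutators [A₀,B₀] = −αB₀, [A₀,C₀] = αC₀ − A₀, [A₀,D₀] = −B₀, [B₀,C₀] = αD₀ − δA₀, [B₀,D₀] = −δB₀, [C₀,D₀] = δC₀ − D₀ hold. -/

import Mathlib

/-- Coercion of an integer into the extended reals. -/
noncomputable def intToE (m : ℤ) : EReal := ((m : ℝ) : EReal)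

/-- The Proposition of Section 5 of the paper (converse to Theorem 1): from a family
of linearly independent vectors F(u), u ∈ 𝒟 = {u₀ + m : m ∈ ℤ, j₋ < m < j₊},
spanning W, on which A(u) = A₀ + αu and D(u) = D₀ + δu act as parameter shifting
operators with quadratic quantum determinant Δ(u) = αδu² + Q₁u + Q₀, one
reconstructs operators B₀ and C₀ satisfying the rank-1 QISM I relations with
β = 0, γ = 1. -/
theorem stmt_5 {W : Type*} [AddCommGroup W] [Module ℂ W]
    (u₀ : ℂ) (jm jp : EReal)
    (hjm : jm = ⊥ ∨ jm = ⊤ ∨ ∃ k : ℤ, jm = intToE k)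
    (hjp : jp = ⊥ ∨ jp = ⊤ ∨ ∃ k : ℤ, jp = intToE k)
    (hlt : jm + 1 < jp)
    (F : ℂ → W)
    (hindep : LinearIndependent ℂ
      (fun m : {m : ℤ // jm < intToE m ∧ intToE m < jp} => F (u₀ + (m : ℂ))))
    (hspan : Submodule.span ℂ
      (Set.range (fun m : {m : ℤ // jm < intToE m ∧ intToE m < jp} => F (u₀ + (m : ℂ)))) = ⊤)
    (α δ Q₀ Q₁ : ℂ) (Δminus Δplus : ℂ → ℂ)
    (A₀ D₀ : Module.End ℂ W)
    (hA : ∀ m : ℤ, jm < intToE m → intToE m < jp →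
      jm < intToE (m - 1) → intToE (m - 1) < jp →
      A₀ (F (u₀ + (m : ℂ))) + (α * (u₀ + (m : ℂ))) • F (u₀ + (m : ℂ))
        = Δminus (u₀ + (m : ℂ) - 1/2) • F (u₀ + (m : ℂ) - 1))
    (hAend : ∀ k : ℤ, jm = intToE k →
      A₀ (F (u₀ + (k : ℂ) + 1)) + (α * (u₀ + (k : ℂ) + 1)) • F (u₀ + (k : ℂ) + 1) = 0)
    (hD : ∀ m : ℤ, jm < intToE m → intToE m < jp →
      jm < intToE (m + 1) → intToE (m + 1) < jp →
      D₀ (F (u₀ + (m : ℂ))) + (δ * (u₀ + (m : ℂ))) • F (u₀ + (m : ℂ))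
        = Δplus (u₀ + (m : ℂ) + 1/2) • F (u₀ + (m : ℂ) + 1))
    (hDend : ∀ k : ℤ, jp = intToE k →
      D₀ (F (u₀ + (k : ℂ) - 1)) + (δ * (u₀ + (k : ℂ) - 1)) • F (u₀ + (k : ℂ) - 1) = 0)
    (hΔ : ∀ m : ℤ, jm < intToE m → intToE m < jp →
      jm < intToE (m + 1) → intToE (m + 1) < jp →
      Δplus (u₀ + (m : ℂ) + 1/2) * Δminus (u₀ + (m : ℂ) + 1/2)
        = α * δ * (u₀ + (m : ℂ) + 1/2) ^ 2 + Q₁ * (u₀ + (m : ℂ) + 1/2) + Q₀)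
    (hzp : ∀ k : ℤ, jp = intToE k →
      α * δ * (u₀ + (k : ℂ) - 1/2) ^ 2 + Q₁ * (u₀ + (k : ℂ) - 1/2) + Q₀ = 0)
    (hzm : ∀ k : ℤ, jm = intToE k →
      α * δ * (u₀ + (k : ℂ) + 1/2) ^ 2 + Q₁ * (u₀ + (k : ℂ) + 1/2) + Q₀ = 0) :
    (D₀ * A₀ - A₀ * D₀ = α • D₀ + δ • A₀ - Q₁ • (1 : Module.End ℂ W)) ∧
    (∃ C₀ : Module.End ℂ W, ∀ m : ℤ, jm < intToE m → intToE m < jp →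
      C₀ (F (u₀ + (m : ℂ))) = (-(u₀ + (m : ℂ))) • F (u₀ + (m : ℂ))) ∧
    (∀ B₀ C₀ : Module.End ℂ W,
      B₀ = α • D₀ + δ • A₀ - Q₁ • (1 : Module.End ℂ W) →
      (∀ m : ℤ, jm < intToE m → intToE m < jp →
        C₀ (F (u₀ + (m : ℂ))) = (-(u₀ + (m : ℂ))) • F (u₀ + (m : ℂ))) →
      (B₀ * C₀ = (A₀ + α • (1 : Module.End ℂ W)) * D₀
          - ((1/4 : ℂ) * α * δ + (1/2 : ℂ) * Q₁ + Q₀) • (1 : Module.End ℂ W) ∧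
       A₀ * B₀ - B₀ * A₀ = -α • B₀ ∧
       A₀ * C₀ - C₀ * A₀ = α • C₀ - A₀ ∧
       A₀ * D₀ - D₀ * A₀ = -B₀ ∧
       B₀ * C₀ - C₀ * B₀ = α • D₀ - δ • A₀ ∧
       B₀ * D₀ - D₀ * B₀ = -δ • B₀ ∧
       C₀ * D₀ - D₀ * C₀ = δ • C₀ - D₀)) := by
  classical
  -- arithmetic facts about intToE
  have coe_lt : ∀ k l : ℤ, intToE k < intToE l ↔ k < l := by
    intro k l
    simp only [intToE, EReal.coe_lt_coe_iff]
    exact_mod_cast Iff.rfl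
  have coe_le : ∀ k l : ℤ, intToE k ≤ intToE l ↔ k ≤ l := by
    intro k l
    simp only [intToE, EReal.coe_le_coe_iff]
    exact_mod_cast Iff.rfl
  -- boundary classification
  have hmL : ∀ m : ℤ, jm < intToE m → intToE m < jp →
      ¬ (jm < intToE (m-1) ∧ intToE (m-1) < jp) → jm = intToE (m-1) := by
    intro m h1 h2 hnot
    have hlt2 : intToE (m-1) < jp := lt_trans ((coe_lt _ _).2 (by omega)) h2
    have hle : intToE (m-1) ≤ jm := not_lt.1 fun h => hnot ⟨h, hlt2⟩
    rcases hjm with rfl | rfl | ⟨k, rfl⟩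
    · exact absurd (le_bot_iff.1 hle) (EReal.coe_ne_bot _)
    · exact absurd h1 not_top_lt
    · have h3 : m - 1 ≤ k := (coe_le _ _).1 hle
      have h4 : k < m := (coe_lt _ _).1 h1
      have : k = m - 1 := by omega
      rw [this]
  have hmR : ∀ m : ℤ, jm < intToE m → intToE m < jp →
      ¬ (jm < intToE (m+1) ∧ intToE (m+1) < jp) → jp = intToE (m+1) := by
    intro m h1 h2 hnot
    have hlt2 : jm < intToE (m+1) := lt_trans h1 ((coe_lt _ _).2 (by omega))
    have hle : jp ≤ intToE (m+1) := not_lt.1 fun h => hnot ⟨hlt2, h⟩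
    rcases hjp with rfl | rfl | ⟨k, rfl⟩
    · exact absurd h2 (by simp)
    · exact absurd (top_le_iff.1 hle) (EReal.coe_ne_top _)
    · have h3 : k ≤ m + 1 := (coe_le _ _).1 hle
      have h4 : m < k := (coe_lt _ _).1 h2
      have : k = m + 1 := by omega
      rw [this]
  -- the coefficient functions
  obtain ⟨a, ha⟩ : ∃ a : ℤ → ℂ, ∀ n, a n =
      if jm < intToE (n-1) ∧ intToE (n-1) < jp then Δminus (u₀ + (n:ℂ) - 1/2) else 0 :=
    ⟨_, fun n => rfl⟩
  obtain ⟨d, hd⟩ : ∃ d : ℤ → ℂ, ∀ n, d n =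
      if jm < intToE (n+1) ∧ intToE (n+1) < jp then Δplus (u₀ + (n:ℂ) + 1/2) else 0 :=
    ⟨_, fun n => rfl⟩
  have haI : ∀ n : ℤ, a n ≠ 0 → jm < intToE (n-1) ∧ intToE (n-1) < jp := by
    intro n h
    by_contra hc
    exact h ((ha n).trans (if_neg hc))
  have hdI : ∀ n : ℤ, d n ≠ 0 → jm < intToE (n+1) ∧ intToE (n+1) < jp := by
    intro n h
    by_contra hc
    exact h ((hd n).trans (if_neg hc))
  -- A acts as a shift
  have keyA : ∀ (n : ℤ) (x y : ℂ), x = u₀ + (n:ℂ) → y = u₀ + (n:ℂ) - 1 →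
      jm < intToE n → intToE n < jp →
      A₀ (F x) = a n • F y - (α * x) • F x := by
    intro n x y hx hy h1 h2
    subst hx; subst hy
    by_cases h : jm < intToE (n-1) ∧ intToE (n-1) < jp
    · have han : a n = Δminus (u₀ + (n:ℂ) - 1/2) := (ha n).trans (if_pos h)
      rw [han, eq_sub_iff_add_eq]
      exact hA n h1 h2 h.1 h.2
    · have hb := hmL n h1 h2 h
      have hend := hAend (n-1) hb
      have harg : u₀ + ((n-1 : ℤ):ℂ) + 1 = u₀ + (n:ℂ) := by push_cast; ring
      rw [harg] at hend
      have han : a n = 0 := (ha n).trans (if_neg h)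
      rw [han, zero_smul, zero_sub, eq_neg_iff_add_eq_zero]
      exact hend
  have keyD : ∀ (n : ℤ) (x y : ℂ), x = u₀ + (n:ℂ) → y = u₀ + (n:ℂ) + 1 →
      jm < intToE n → intToE n < jp →
      D₀ (F x) = d n • F y - (δ * x) • F x := by
    intro n x y hx hy h1 h2
    subst hx; subst hy
    by_cases h : jm < intToE (n+1) ∧ intToE (n+1) < jp
    · have hdn : d n = Δplus (u₀ + (n:ℂ) + 1/2) := (hd n).trans (if_pos h)
      rw [hdn, eq_sub_iff_add_eq]
      exact hD n h1 h2 h.1 h.2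
    · have hb := hmR n h1 h2 h
      have hend := hDend (n+1) hb
      have harg : u₀ + ((n+1 : ℤ):ℂ) - 1 = u₀ + (n:ℂ) := by push_cast; ring
      rw [harg] at hend
      have hdn : d n = 0 := (hd n).trans (if_neg h)
      rw [hdn, zero_smul, zero_sub, eq_neg_iff_add_eq_zero]
      exact hend
  -- smul versions
  have appA : ∀ (n : ℤ) (x y : ℂ) (c : ℂ), x = u₀ + (n:ℂ) → y = u₀ + (n:ℂ) - 1 →
      (c ≠ 0 → jm < intToE n ∧ intToE n < jp) →
      A₀ (c • F x) = (c * a n) • F y - (c * (α * x)) • F x := by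
    intro n x y c hx hy hc
    by_cases h0 : c = 0
    · simp [h0]
    · rw [map_smul, keyA n x y hx hy (hc h0).1 (hc h0).2, smul_sub, smul_smul, smul_smul]
  have appD : ∀ (n : ℤ) (x y : ℂ) (c : ℂ), x = u₀ + (n:ℂ) → y = u₀ + (n:ℂ) + 1 →
      (c ≠ 0 → jm < intToE n ∧ intToE n < jp) →
      D₀ (c • F x) = (c * d n) • F y - (c * (δ * x)) • F x := by
    intro n x y c hx hy hc
    by_cases h0 : c = 0
    · simp [h0]
    · rw [map_smul, keyD n x y hx hy (hc h0).1 (hc h0).2, smul_sub, smul_smul, smul_smul]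
  -- the quantum determinant relations
  have Lad : ∀ n : ℤ, jm < intToE n → intToE n < jp →
      a n * d (n-1) = α * δ * (u₀ + (n:ℂ) - 1/2) ^ 2 + Q₁ * (u₀ + (n:ℂ) - 1/2) + Q₀ := by
    intro n h1 h2
    have hidx : (n : ℤ) - 1 + 1 = n := by ring
    have hdn : d (n-1) = if jm < intToE n ∧ intToE n < jp then
        Δplus (u₀ + ((n-1:ℤ):ℂ) + 1/2) else 0 := by rw [hd (n-1), hidx]
    rw [hdn, if_pos ⟨h1, h2⟩]
    have harg : u₀ + ((n-1 : ℤ):ℂ) + 1/2 = u₀ + (n:ℂ) - 1/2 := by push_cast; ring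
    rw [harg]
    by_cases h : jm < intToE (n-1) ∧ intToE (n-1) < jp
    · have han : a n = Δminus (u₀ + (n:ℂ) - 1/2) := (ha n).trans (if_pos h)
      rw [han]
      have hq := hΔ (n-1) h.1 h.2 (by rw [hidx]; exact h1) (by rw [hidx]; exact h2)
      rw [harg] at hq
      linear_combination hq
    · have hb := hmL n h1 h2 h
      have hz := hzm (n-1) hb
      have harg2 : u₀ + ((n-1 : ℤ):ℂ) + 1/2 = u₀ + (n:ℂ) - 1/2 := harg
      rw [harg2] at hz
      have han : a n = 0 := (ha n).trans (if_neg h)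
      rw [han, zero_mul, hz]
  have Lda : ∀ n : ℤ, jm < intToE n → intToE n < jp →
      d n * a (n+1) = α * δ * (u₀ + (n:ℂ) + 1/2) ^ 2 + Q₁ * (u₀ + (n:ℂ) + 1/2) + Q₀ := by
    intro n h1 h2
    have hidx : (n : ℤ) + 1 - 1 = n := by ring
    have han : a (n+1) = if jm < intToE n ∧ intToE n < jp then
        Δminus (u₀ + ((n+1:ℤ):ℂ) - 1/2) else 0 := by rw [ha (n+1), hidx]
    rw [han, if_pos ⟨h1, h2⟩]
    have harg : u₀ + ((n+1 : ℤ):ℂ) - 1/2 = u₀ + (n:ℂ) + 1/2 := by push_cast; ring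
    rw [harg]
    by_cases h : jm < intToE (n+1) ∧ intToE (n+1) < jp
    · have hdn : d n = Δplus (u₀ + (n:ℂ) + 1/2) := (hd n).trans (if_pos h)
      rw [hdn]
      exact hΔ n h1 h2 h.1 h.2
    · have hb := hmR n h1 h2 h
      have hz := hzp (n+1) hb
      have harg2 : u₀ + ((n+1 : ℤ):ℂ) - 1/2 = u₀ + (n:ℂ) + 1/2 := harg
      rw [harg2] at hz
      have hdn : d n = 0 := (hd n).trans (if_neg h)
      rw [hdn, zero_mul, hz]
  -- extensionality on the spanning family
  have hext : ∀ f g : Module.End ℂ W,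
      (∀ m : ℤ, jm < intToE m → intToE m < jp →
        f (F (u₀ + (m:ℂ))) = g (F (u₀ + (m:ℂ)))) → f = g := by
    intro f g h
    apply LinearMap.ext_on hspan
    rintro x ⟨s, rfl⟩
    exact h s s.2.1 s.2.2
  -- Part (1)
  have h1 : D₀ * A₀ - A₀ * D₀ = α • D₀ + δ • A₀ - Q₁ • (1 : Module.End ℂ W) := by
    apply hext
    intro m hm1 hm2
    have hm : jm < intToE m ∧ intToE m < jp := ⟨hm1, hm2⟩
    simp only [LinearMap.sub_apply, Module.End.mul_apply, LinearMap.add_apply,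
      LinearMap.smul_apply, Module.End.one_apply]
    rw [keyA m (u₀ + (m:ℂ)) (u₀ + (m:ℂ) - 1) rfl rfl hm1 hm2,
      keyD m (u₀ + (m:ℂ)) (u₀ + (m:ℂ) + 1) rfl rfl hm1 hm2,
      map_sub, map_sub,
      appD (m-1) (u₀ + (m:ℂ) - 1) (u₀ + (m:ℂ)) (a m) (by push_cast; ring) (by push_cast; ring)
        (haI m),
      appD m (u₀ + (m:ℂ)) (u₀ + (m:ℂ) + 1) (α * (u₀ + (m:ℂ))) rfl rfl (fun _ => hm),
      appA (m+1) (u₀ + (m:ℂ) + 1) (u₀ + (m:ℂ)) (d m) (by push_cast; ring) (by push_cast; ring)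
        (hdI m),
      appA m (u₀ + (m:ℂ)) (u₀ + (m:ℂ) - 1) (δ * (u₀ + (m:ℂ))) rfl rfl (fun _ => hm)]
    match_scalars <;>
      (try simp only [show (-1+m:ℤ) = m - 1 from by ring, show (1+m:ℤ) = m + 1 from by ring]) <;>
      first
      | ring1
      | linear_combination Lad m hm1 hm2 - Lda m hm1 hm2
      | linear_combination Lda m hm1 hm2 - Lad m hm1 hm2
      | linear_combination Lda m hm1 hm2
      | linear_combination -Lda m hm1 hm2
      | linear_combination Lad m hm1 hm2
      | linear_combination -Lad m hm1 hm2
  refine ⟨h1, ?_, ?_⟩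
  · -- existence of C₀
    let b : Module.Basis {m : ℤ // jm < intToE m ∧ intToE m < jp} ℂ W :=
      Module.Basis.mk hindep (le_of_eq hspan.symm)
    refine ⟨b.constr ℂ (fun s => (-(u₀ + ((s : ℤ) : ℂ))) • F (u₀ + ((s : ℤ) : ℂ))), ?_⟩
    intro m hm1 hm2
    have hb : b ⟨m, hm1, hm2⟩ = F (u₀ + (m:ℂ)) := Module.Basis.mk_apply hindep _ ⟨m, hm1, hm2⟩
    rw [← hb, Module.Basis.constr_basis]
    rw [hb]
  · -- Part (2)
    intro B₀ C₀ hB hC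
    have appC : ∀ (n : ℤ) (x : ℂ) (c : ℂ), x = u₀ + (n:ℂ) →
        (c ≠ 0 → jm < intToE n ∧ intToE n < jp) →
        C₀ (c • F x) = (c * (-x)) • F x := by
      intro n x c hx h
      by_cases h0 : c = 0
      · simp [h0]
      · subst hx
        rw [map_smul, hC n (h h0).1 (h h0).2, smul_smul]
    -- B₀ C₀ product identity
    have hBC : B₀ * C₀ = (A₀ + α • (1 : Module.End ℂ W)) * D₀
        - ((1/4 : ℂ) * α * δ + (1/2 : ℂ) * Q₁ + Q₀) • (1 : Module.End ℂ W) := by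
      rw [hB]
      apply hext
      intro m hm1 hm2
      have hm : jm < intToE m ∧ intToE m < jp := ⟨hm1, hm2⟩
      simp only [LinearMap.sub_apply, Module.End.mul_apply, LinearMap.add_apply,
        LinearMap.smul_apply, Module.End.one_apply]
      rw [hC m hm1 hm2,
        keyD m (u₀ + (m:ℂ)) (u₀ + (m:ℂ) + 1) rfl rfl hm1 hm2,
        map_sub,
        appD m (u₀ + (m:ℂ)) (u₀ + (m:ℂ) + 1) (-(u₀ + (m:ℂ))) rfl rfl (fun _ => hm),
        appA m (u₀ + (m:ℂ)) (u₀ + (m:ℂ) - 1) (-(u₀ + (m:ℂ))) rfl rfl (fun _ => hm),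
        appA (m+1) (u₀ + (m:ℂ) + 1) (u₀ + (m:ℂ)) (d m) (by push_cast; ring) (by push_cast; ring)
          (hdI m),
        appA m (u₀ + (m:ℂ)) (u₀ + (m:ℂ) - 1) (δ * (u₀ + (m:ℂ))) rfl rfl (fun _ => hm)]
      match_scalars <;>
        (try simp only [show (-1+m:ℤ) = m - 1 from by ring, show (1+m:ℤ) = m + 1 from by ring]) <;>
        first
        | ring1
        | linear_combination Lad m hm1 hm2 - Lda m hm1 hm2
        | linear_combination Lda m hm1 hm2 - Lad m hm1 hm2
        | linear_combination Lda m hm1 hm2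
        | linear_combination -Lda m hm1 hm2
        | linear_combination Lad m hm1 hm2
        | linear_combination -Lad m hm1 hm2
    -- [A,C]
    have hAC : A₀ * C₀ - C₀ * A₀ = α • C₀ - A₀ := by
      apply hext
      intro m hm1 hm2
      have hm : jm < intToE m ∧ intToE m < jp := ⟨hm1, hm2⟩
      simp only [LinearMap.sub_apply, Module.End.mul_apply, LinearMap.smul_apply]
      rw [hC m hm1 hm2,
        keyA m (u₀ + (m:ℂ)) (u₀ + (m:ℂ) - 1) rfl rfl hm1 hm2,
        map_sub,
        appA m (u₀ + (m:ℂ)) (u₀ + (m:ℂ) - 1) (-(u₀ + (m:ℂ))) rfl rfl (fun _ => hm),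
        appC (m-1) (u₀ + (m:ℂ) - 1) (a m) (by push_cast; ring) (haI m),
        appC m (u₀ + (m:ℂ)) (α * (u₀ + (m:ℂ))) rfl (fun _ => hm)]
      match_scalars <;> ring
    -- [C,D]
    have hCD : C₀ * D₀ - D₀ * C₀ = δ • C₀ - D₀ := by
      apply hext
      intro m hm1 hm2
      have hm : jm < intToE m ∧ intToE m < jp := ⟨hm1, hm2⟩
      simp only [LinearMap.sub_apply, Module.End.mul_apply, LinearMap.smul_apply]
      rw [hC m hm1 hm2,
        keyD m (u₀ + (m:ℂ)) (u₀ + (m:ℂ) + 1) rfl rfl hm1 hm2,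
        map_sub,
        appD m (u₀ + (m:ℂ)) (u₀ + (m:ℂ) + 1) (-(u₀ + (m:ℂ))) rfl rfl (fun _ => hm),
        appC (m+1) (u₀ + (m:ℂ) + 1) (d m) (by push_cast; ring) (hdI m),
        appC m (u₀ + (m:ℂ)) (δ * (u₀ + (m:ℂ))) rfl (fun _ => hm)]
      match_scalars <;> ring
    -- algebraic consequences
    have hDA : D₀ * A₀ = A₀ * D₀ + (α • D₀ + δ • A₀ - Q₁ • (1 : Module.End ℂ W)) := by
      rw [← h1]; abel
    have hCA : C₀ * A₀ = A₀ * C₀ - (α • C₀ - A₀) := by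
      rw [← hAC]; abel
    have hDC : D₀ * C₀ = C₀ * D₀ - (δ • C₀ - D₀) := by
      rw [← hCD]; abel
    refine ⟨hBC, ?_, hAC, ?_, ?_, ?_, hCD⟩
    · -- [A,B] = -α B
      rw [hB]
      simp only [mul_add, add_mul, mul_sub, sub_mul, smul_mul_assoc, mul_smul_comm,
        one_mul, mul_one]
      rw [hDA]
      module
    · -- [A,D] = -B
      rw [hB, ← h1]
      abel
    · -- [B,C] = αD - δA
      rw [hB]
      simp only [mul_add, add_mul, mul_sub, sub_mul, smul_mul_assoc, mul_smul_comm,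
        one_mul, mul_one]
      rw [hDC, hCA]
      module
    · -- [B,D] = -δ B
      rw [hB]
      simp only [mul_add, add_mul, mul_sub, sub_mul, smul_mul_assoc, mul_smul_comm,
        one_mul, mul_one]
      rw [hDA]
      module
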